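/- In the infinite generalized Petersen graph GP(∞,3), the subgraph induced on the six vertices {a_1, a_2, a_3, b_1, b_2, b_3} is a tree (its edges are (a_1,a_2), (a_2,a_3), (a_1,b_1), (a_2,b_2), (a_3,b_3)), and this subgraph is isometric in GP(∞,3): for any two of these six vertices, their distance in the induced subgraph equals their distance in GP(∞,3). -/

import Mathlib

/-- Edge relation generating the infinite generalized Petersen graph `GP(∞,k)` on
vertex set `ℤ ⊕ ℤ`, where `Sum.inl i` is `a_i` and `Sum.inr i` is `b_i`. -/
def GPinfRel (k : ℕ) : (ℤ ⊕ ℤ) → (ℤ ⊕ ℤ) → Prop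
  | Sum.inl i, Sum.inl i' => i' = i + 1
  | Sum.inl i, Sum.inr i' => i' = i
  | Sum.inr _, Sum.inl _ => False
  | Sum.inr i, Sum.inr i' => i' = i + (k : ℤ)

/-- The infinite generalized Petersen graph `GP(∞,k)`. -/
def GPinf (k : ℕ) : SimpleGraph (ℤ ⊕ ℤ) := SimpleGraph.fromRel (GPinfRel k)

namespace Stmt13

def S : Set (ℤ ⊕ ℤ) := {Sum.inl 1, Sum.inl 2, Sum.inl 3, Sum.inr 1, Sum.inr 2, Sum.inr 3}

abbrev G := GPinf 3
abbrev Gi := (GPinf 3).induce S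

def A1 : S := ⟨.inl 1, by simp [S]⟩
def A2 : S := ⟨.inl 2, by simp [S]⟩
def A3 : S := ⟨.inl 3, by simp [S]⟩
def B1 : S := ⟨.inr 1, by simp [S]⟩
def B2 : S := ⟨.inr 2, by simp [S]⟩
def B3 : S := ⟨.inr 3, by simp [S]⟩

lemma adj_iff (u v : ℤ ⊕ ℤ) : (GPinf 3).Adj u v ↔ u ≠ v ∧ (GPinfRel 3 u v ∨ GPinfRel 3 v u) :=
  SimpleGraph.fromRel_adj _ u v

lemma gi_adj {u v : S} : Gi.Adj u v ↔ G.Adj u.val v.val := Iff.rfl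

lemma nbr_inl (i : ℤ) (x : ℤ ⊕ ℤ) (h : G.Adj (.inl i) x) :
    x = .inl (i+1) ∨ x = .inl (i-1) ∨ x = .inr i := by
  rw [adj_iff] at h
  obtain ⟨hne, h⟩ := h
  cases x with
  | inl j => simp [GPinfRel] at h ⊢; omega
  | inr j => simp [GPinfRel] at h ⊢; omega

lemma nbr_inr (i : ℤ) (x : ℤ ⊕ ℤ) (h : G.Adj (.inr i) x) :
    x = .inl i ∨ x = .inr (i+3) ∨ x = .inr (i-3) := by
  rw [adj_iff] at h
  obtain ⟨hne, h⟩ := h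
  cases x with
  | inl j => simp [GPinfRel] at h ⊢; omega
  | inr j => simp [GPinfRel] at h ⊢; omega

-- the five edges
lemma e12 : Gi.Adj A1 A2 := by rw [gi_adj]; simp [A1, A2, adj_iff, GPinfRel]
lemma e23 : Gi.Adj A2 A3 := by rw [gi_adj]; simp [A2, A3, adj_iff, GPinfRel]
lemma e1b : Gi.Adj A1 B1 := by rw [gi_adj]; simp [A1, B1, adj_iff, GPinfRel]
lemma e2b : Gi.Adj A2 B2 := by rw [gi_adj]; simp [A2, B2, adj_iff, GPinfRel]
lemma e3b : Gi.Adj A3 B3 := by rw [gi_adj]; simp [A3, B3, adj_iff, GPinfRel]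

lemma mem_cases (u : S) : u = A1 ∨ u = A2 ∨ u = A3 ∨ u = B1 ∨ u = B2 ∨ u = B3 := by
  obtain ⟨x, hx⟩ := u
  simp only [S, Set.mem_insert_iff, Set.mem_singleton_iff] at hx
  rcases hx with rfl | rfl | rfl | rfl | rfl | rfl
  · exact Or.inl rfl
  · exact Or.inr (Or.inl rfl)
  · exact Or.inr (Or.inr (Or.inl rfl))
  · exact Or.inr (Or.inr (Or.inr (Or.inl rfl)))
  · exact Or.inr (Or.inr (Or.inr (Or.inr (Or.inl rfl))))
  · exact Or.inr (Or.inr (Or.inr (Or.inr (Or.inr rfl))))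

open SimpleGraph.Walk in
lemma reach_A2 (u : S) : Gi.Reachable u A2 := by
  rcases mem_cases u with rfl | rfl | rfl | rfl | rfl | rfl
  · exact ⟨cons e12 nil⟩
  · exact ⟨nil⟩
  · exact ⟨cons e23.symm nil⟩
  · exact ⟨cons e1b.symm (cons e12 nil)⟩
  · exact ⟨cons e2b.symm nil⟩
  · exact ⟨cons e3b.symm (cons e23.symm nil)⟩

lemma gi_connected : Gi.Connected := by
  rw [SimpleGraph.connected_iff]
  exact ⟨fun u v => (reach_A2 u).trans (reach_A2 v).symm, ⟨A2⟩⟩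

/-! ### Acyclicity -/

lemma no_reach {V : Type*} {H : SimpleGraph V} (f : V → Prop)
    (hf : ∀ x y, H.Adj x y → (f x ↔ f y)) {u v : V} (hne : ¬(f u ↔ f v)) :
    ¬ H.Reachable u v := by
  intro hr
  obtain ⟨w⟩ := hr
  apply hne
  clear hne
  induction w with
  | nil => rfl
  | cons h p ih => exact (hf _ _ h).trans ih

lemma gi_adj_cases {u v : S} (h : Gi.Adj u v) :
    (u = A1 ∧ v = A2) ∨ (u = A2 ∧ v = A1) ∨ (u = A2 ∧ v = A3) ∨ (u = A3 ∧ v = A2) ∨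
    (u = A1 ∧ v = B1) ∨ (u = B1 ∧ v = A1) ∨ (u = A2 ∧ v = B2) ∨ (u = B2 ∧ v = A2) ∨
    (u = A3 ∧ v = B3) ∨ (u = B3 ∧ v = A3) := by
  obtain ⟨x, hx⟩ := u
  obtain ⟨y, hy⟩ := v
  rw [gi_adj] at h
  simp only [S, Set.mem_insert_iff, Set.mem_singleton_iff] at hx hy
  simp only [A1, A2, A3, B1, B2, B3, Subtype.mk.injEq]
  rw [adj_iff] at h
  obtain ⟨hne, h⟩ := h
  cases x <;> cases y <;> simp [GPinfRel, Subtype.ext_iff] at h hx hy ⊢ <;> omega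

lemma del_adj {e : Sym2 S} {x y : S} (h : (Gi \ SimpleGraph.fromEdgeSet {e}).Adj x y) :
    Gi.Adj x y ∧ s(x, y) ≠ e := by
  rw [SimpleGraph.sdiff_adj, SimpleGraph.fromEdgeSet_adj] at h
  exact ⟨h.1, fun he => h.2 ⟨he, h.1.ne⟩⟩

section cuts

lemma noreach12 : ¬ (Gi \ SimpleGraph.fromEdgeSet {s(A1, A2)}).Reachable A1 A2 := by
  apply no_reach (fun u => u = A1 ∨ u = B1)
  · intro x y hxy
    obtain ⟨hadj, hne⟩ := del_adj hxy
    rcases gi_adj_cases hadj with ⟨rfl, rfl⟩|⟨rfl, rfl⟩|⟨rfl, rfl⟩|⟨rfl, rfl⟩|⟨rfl, rfl⟩|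
      ⟨rfl, rfl⟩|⟨rfl, rfl⟩|⟨rfl, rfl⟩|⟨rfl, rfl⟩|⟨rfl, rfl⟩ <;>
      first
        | exact absurd rfl hne
        | exact absurd Sym2.eq_swap hne
        | simp [A1, A2, A3, B1, B2, B3, Subtype.ext_iff] <;> omega
  · simp [A1, A2, A3, B1, B2, B3, Subtype.ext_iff] <;> omega

lemma noreach23 : ¬ (Gi \ SimpleGraph.fromEdgeSet {s(A2, A3)}).Reachable A2 A3 := by
  apply no_reach (fun u => u = A3 ∨ u = B3)
  · intro x y hxy
    obtain ⟨hadj, hne⟩ := del_adj hxy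
    rcases gi_adj_cases hadj with ⟨rfl, rfl⟩|⟨rfl, rfl⟩|⟨rfl, rfl⟩|⟨rfl, rfl⟩|⟨rfl, rfl⟩|
      ⟨rfl, rfl⟩|⟨rfl, rfl⟩|⟨rfl, rfl⟩|⟨rfl, rfl⟩|⟨rfl, rfl⟩ <;>
      first
        | exact absurd rfl hne
        | exact absurd Sym2.eq_swap hne
        | simp [A1, A2, A3, B1, B2, B3, Subtype.ext_iff] <;> omega
  · simp [A1, A2, A3, B1, B2, B3, Subtype.ext_iff] <;> omega

lemma noreach1b : ¬ (Gi \ SimpleGraph.fromEdgeSet {s(A1, B1)}).Reachable A1 B1 := by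
  apply no_reach (fun u => u = B1)
  · intro x y hxy
    obtain ⟨hadj, hne⟩ := del_adj hxy
    rcases gi_adj_cases hadj with ⟨rfl, rfl⟩|⟨rfl, rfl⟩|⟨rfl, rfl⟩|⟨rfl, rfl⟩|⟨rfl, rfl⟩|
      ⟨rfl, rfl⟩|⟨rfl, rfl⟩|⟨rfl, rfl⟩|⟨rfl, rfl⟩|⟨rfl, rfl⟩ <;>
      first
        | exact absurd rfl hne
        | exact absurd Sym2.eq_swap hne
        | simp [A1, A2, A3, B1, B2, B3, Subtype.ext_iff] <;> omega
  · simp [A1, A2, A3, B1, B2, B3, Subtype.ext_iff] <;> omega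

lemma noreach2b : ¬ (Gi \ SimpleGraph.fromEdgeSet {s(A2, B2)}).Reachable A2 B2 := by
  apply no_reach (fun u => u = B2)
  · intro x y hxy
    obtain ⟨hadj, hne⟩ := del_adj hxy
    rcases gi_adj_cases hadj with ⟨rfl, rfl⟩|⟨rfl, rfl⟩|⟨rfl, rfl⟩|⟨rfl, rfl⟩|⟨rfl, rfl⟩|
      ⟨rfl, rfl⟩|⟨rfl, rfl⟩|⟨rfl, rfl⟩|⟨rfl, rfl⟩|⟨rfl, rfl⟩ <;>
      first
        | exact absurd rfl hne
        | exact absurd Sym2.eq_swap hne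
        | simp [A1, A2, A3, B1, B2, B3, Subtype.ext_iff] <;> omega
  · simp [A1, A2, A3, B1, B2, B3, Subtype.ext_iff] <;> omega

lemma noreach3b : ¬ (Gi \ SimpleGraph.fromEdgeSet {s(A3, B3)}).Reachable A3 B3 := by
  apply no_reach (fun u => u = B3)
  · intro x y hxy
    obtain ⟨hadj, hne⟩ := del_adj hxy
    rcases gi_adj_cases hadj with ⟨rfl, rfl⟩|⟨rfl, rfl⟩|⟨rfl, rfl⟩|⟨rfl, rfl⟩|⟨rfl, rfl⟩|
      ⟨rfl, rfl⟩|⟨rfl, rfl⟩|⟨rfl, rfl⟩|⟨rfl, rfl⟩|⟨rfl, rfl⟩ <;>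
      first
        | exact absurd rfl hne
        | exact absurd Sym2.eq_swap hne
        | simp [A1, A2, A3, B1, B2, B3, Subtype.ext_iff] <;> omega
  · simp [A1, A2, A3, B1, B2, B3, Subtype.ext_iff] <;> omega

lemma gi_acyclic : Gi.IsAcyclic := by
  rw [SimpleGraph.isAcyclic_iff_forall_adj_isBridge]
  intro v w hvw
  rw [SimpleGraph.isBridge_iff]
  rcases gi_adj_cases hvw with ⟨rfl, rfl⟩|⟨rfl, rfl⟩|⟨rfl, rfl⟩|⟨rfl, rfl⟩|⟨rfl, rfl⟩|
    ⟨rfl, rfl⟩|⟨rfl, rfl⟩|⟨rfl, rfl⟩|⟨rfl, rfl⟩|⟨rfl, rfl⟩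
  · exact noreach12
  · rw [show s(A2, A1) = s(A1, A2) from Sym2.eq_swap]
    exact fun h => noreach12 h.symm
  · exact noreach23
  · rw [show s(A3, A2) = s(A2, A3) from Sym2.eq_swap]
    exact fun h => noreach23 h.symm
  · exact noreach1b
  · rw [show s(B1, A1) = s(A1, B1) from Sym2.eq_swap]
    exact fun h => noreach1b h.symm
  · exact noreach2b
  · rw [show s(B2, A2) = s(A2, B2) from Sym2.eq_swap]
    exact fun h => noreach2b h.symm
  · exact noreach3b
  · rw [show s(B3, A3) = s(A3, B3) from Sym2.eq_swap]
    exact fun h => noreach3b h.symm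

end cuts

/-! ### Distances -/

lemma key {u v : S} (w : Gi.Walk u v) (d : ℕ) (hw : w.length = d)
    (hlow : ∀ p : G.Walk u.val v.val, p.length < d → False) :
    Gi.dist u v = d ∧ G.dist u.val v.val = d := by
  have hmap : ∀ p : Gi.Walk u v, G.dist u.val v.val ≤ p.length := by
    intro p
    have := SimpleGraph.dist_le (p.map (SimpleGraph.Embedding.induce S).toHom)
    rw [SimpleGraph.Walk.length_map] at this
    exact this
  have hr : G.Reachable u.val v.val := ⟨w.map (SimpleGraph.Embedding.induce S).toHom⟩
  have hl : d ≤ G.dist u.val v.val := by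
    obtain ⟨p, hp⟩ := hr.exists_walk_length_eq_dist
    by_contra hc
    push_neg at hc
    exact hlow p (by omega)
  have h1 : G.dist u.val v.val = d := le_antisymm (hw ▸ hmap w) hl
  have h2 : Gi.dist u v ≤ d := hw ▸ SimpleGraph.dist_le w
  have h3 : d ≤ Gi.dist u v := by
    obtain ⟨p, hp⟩ := (SimpleGraph.Reachable.exists_walk_length_eq_dist ⟨w⟩)
    calc d ≤ p.length := h1 ▸ hmap p
    _ = _ := hp
  exact ⟨le_antisymm h2 h3, h1⟩

open SimpleGraph.Walk

-- distance-1 pairs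
lemma d12 : Gi.dist A1 A2 = 1 ∧ G.dist A1.val A2.val = 1 := by
  refine key (cons e12 nil) 1 rfl ?_
  intro p hlen
  cases p with
  | cons h1 p => simp at hlen

lemma d23 : Gi.dist A2 A3 = 1 ∧ G.dist A2.val A3.val = 1 := by
  refine key (cons e23 nil) 1 rfl ?_
  intro p hlen
  cases p with
  | cons h1 p => simp at hlen

lemma d1b : Gi.dist A1 B1 = 1 ∧ G.dist A1.val B1.val = 1 := by
  refine key (cons e1b nil) 1 rfl ?_
  intro p hlen
  cases p with
  | cons h1 p => simp at hlen

lemma d2b : Gi.dist A2 B2 = 1 ∧ G.dist A2.val B2.val = 1 := by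
  refine key (cons e2b nil) 1 rfl ?_
  intro p hlen
  cases p with
  | cons h1 p => simp at hlen

lemma d3b : Gi.dist A3 B3 = 1 ∧ G.dist A3.val B3.val = 1 := by
  refine key (cons e3b nil) 1 rfl ?_
  intro p hlen
  cases p with
  | cons h1 p => simp at hlen

-- distance-2 pairs
lemma d13 : Gi.dist A1 A3 = 2 ∧ G.dist A1.val A3.val = 2 := by
  refine key (cons e12 (cons e23 nil)) 2 rfl ?_
  intro p hlen
  cases p with
  | cons h1 p =>
    cases p with
    | nil => exact absurd h1 (by simp [A1, A2, A3, B1, B2, B3, adj_iff, GPinfRel] <;> omega)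
    | cons h2 p => simp at hlen

lemma d1B2 : Gi.dist A1 B2 = 2 ∧ G.dist A1.val B2.val = 2 := by
  refine key (cons e12 (cons e2b nil)) 2 rfl ?_
  intro p hlen
  cases p with
  | cons h1 p =>
    cases p with
    | nil => exact absurd h1 (by simp [A1, A2, A3, B1, B2, B3, adj_iff, GPinfRel] <;> omega)
    | cons h2 p => simp at hlen

lemma d2B1 : Gi.dist A2 B1 = 2 ∧ G.dist A2.val B1.val = 2 := by
  refine key (cons e12.symm (cons e1b nil)) 2 rfl ?_
  intro p hlen
  cases p with
  | cons h1 p =>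
    cases p with
    | nil => exact absurd h1 (by simp [A1, A2, A3, B1, B2, B3, adj_iff, GPinfRel] <;> omega)
    | cons h2 p => simp at hlen

lemma d2B3 : Gi.dist A2 B3 = 2 ∧ G.dist A2.val B3.val = 2 := by
  refine key (cons e23 (cons e3b nil)) 2 rfl ?_
  intro p hlen
  cases p with
  | cons h1 p =>
    cases p with
    | nil => exact absurd h1 (by simp [A1, A2, A3, B1, B2, B3, adj_iff, GPinfRel] <;> omega)
    | cons h2 p => simp at hlen

lemma d3B2 : Gi.dist A3 B2 = 2 ∧ G.dist A3.val B2.val = 2 := by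
  refine key (cons e23.symm (cons e2b nil)) 2 rfl ?_
  intro p hlen
  cases p with
  | cons h1 p =>
    cases p with
    | nil => exact absurd h1 (by simp [A1, A2, A3, B1, B2, B3, adj_iff, GPinfRel] <;> omega)
    | cons h2 p => simp at hlen

-- distance-3 pairs
lemma d1B3 : Gi.dist A1 B3 = 3 ∧ G.dist A1.val B3.val = 3 := by
  refine key (cons e12 (cons e23 (cons e3b nil))) 3 rfl ?_
  intro p hlen
  cases p with
  | cons h1 p =>
    rename_i x
    cases p with
    | nil => exact absurd h1 (by simp [A1, A2, A3, B1, B2, B3, adj_iff, GPinfRel] <;> omega)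
    | cons h2 p =>
      cases p with
      | nil =>
        rcases nbr_inl 1 x h1 with rfl | rfl | rfl <;>
          exact absurd h2 (by simp [A1, A2, A3, B1, B2, B3, adj_iff, GPinfRel] <;> omega)
      | cons h3 p => simp at hlen; omega

lemma d3B1 : Gi.dist A3 B1 = 3 ∧ G.dist A3.val B1.val = 3 := by
  refine key (cons e23.symm (cons e12.symm (cons e1b nil))) 3 rfl ?_
  intro p hlen
  cases p with
  | cons h1 p =>
    rename_i x
    cases p with
    | nil => exact absurd h1 (by simp [A1, A2, A3, B1, B2, B3, adj_iff, GPinfRel] <;> omega)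
    | cons h2 p =>
      cases p with
      | nil =>
        rcases nbr_inl 3 x h1 with rfl | rfl | rfl <;>
          exact absurd h2 (by simp [A1, A2, A3, B1, B2, B3, adj_iff, GPinfRel] <;> omega)
      | cons h3 p => simp at hlen; omega

lemma dB1B2 : Gi.dist B1 B2 = 3 ∧ G.dist B1.val B2.val = 3 := by
  refine key (cons e1b.symm (cons e12 (cons e2b nil))) 3 rfl ?_
  intro p hlen
  cases p with
  | cons h1 p =>
    rename_i x
    cases p with
    | nil => exact absurd h1 (by simp [A1, A2, A3, B1, B2, B3, adj_iff, GPinfRel] <;> omega)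
    | cons h2 p =>
      cases p with
      | nil =>
        rcases nbr_inr 1 x h1 with rfl | rfl | rfl <;>
          exact absurd h2 (by simp [A1, A2, A3, B1, B2, B3, adj_iff, GPinfRel] <;> omega)
      | cons h3 p => simp at hlen; omega

lemma dB2B3 : Gi.dist B2 B3 = 3 ∧ G.dist B2.val B3.val = 3 := by
  refine key (cons e2b.symm (cons e23 (cons e3b nil))) 3 rfl ?_
  intro p hlen
  cases p with
  | cons h1 p =>
    rename_i x
    cases p with
    | nil => exact absurd h1 (by simp [A1, A2, A3, B1, B2, B3, adj_iff, GPinfRel] <;> omega)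
    | cons h2 p =>
      cases p with
      | nil =>
        rcases nbr_inr 2 x h1 with rfl | rfl | rfl <;>
          exact absurd h2 (by simp [A1, A2, A3, B1, B2, B3, adj_iff, GPinfRel] <;> omega)
      | cons h3 p => simp at hlen; omega

-- distance-4 pair
lemma dB1B3 : Gi.dist B1 B3 = 4 ∧ G.dist B1.val B3.val = 4 := by
  refine key (cons e1b.symm (cons e12 (cons e23 (cons e3b nil)))) 4 rfl ?_
  intro p hlen
  cases p with
  | cons h1 p =>
    rename_i x
    cases p with
    | nil => exact absurd h1 (by simp [A1, A2, A3, B1, B2, B3, adj_iff, GPinfRel] <;> omega)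
    | cons h2 p =>
      rename_i y
      cases p with
      | nil =>
        rcases nbr_inr 1 x h1 with rfl | rfl | rfl <;>
          exact absurd h2 (by simp [A1, A2, A3, B1, B2, B3, adj_iff, GPinfRel] <;> omega)
      | cons h3 p =>
        cases p with
        | nil =>
          rcases nbr_inr 1 x h1 with rfl | rfl | rfl <;>
            rcases nbr_inr 3 y ((GPinf 3).adj_symm h3) with rfl | rfl | rfl <;>
            exact absurd h2 (by simp [A1, A2, A3, B1, B2, B3, adj_iff, GPinfRel] <;> omega)
        | cons h4 p => simp at hlen; omega

lemma distEq (u v : S) : Gi.dist u v = G.dist u.val v.val := by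
  have comm : ∀ (x y : S), (Gi.dist x y = G.dist x.val y.val) →
      Gi.dist y x = G.dist y.val x.val := by
    intro x y h
    rw [SimpleGraph.dist_comm, SimpleGraph.dist_comm (u := y.val)]
    exact h
  rcases mem_cases u with rfl | rfl | rfl | rfl | rfl | rfl <;>
    rcases mem_cases v with rfl | rfl | rfl | rfl | rfl | rfl
  · simp [SimpleGraph.dist_self]
  · exact d12.1.trans d12.2.symm
  · exact d13.1.trans d13.2.symm
  · exact d1b.1.trans d1b.2.symm
  · exact d1B2.1.trans d1B2.2.symm
  · exact d1B3.1.trans d1B3.2.symm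
  · exact comm _ _ (d12.1.trans d12.2.symm)
  · simp [SimpleGraph.dist_self]
  · exact d23.1.trans d23.2.symm
  · exact d2B1.1.trans d2B1.2.symm
  · exact d2b.1.trans d2b.2.symm
  · exact d2B3.1.trans d2B3.2.symm
  · exact comm _ _ (d13.1.trans d13.2.symm)
  · exact comm _ _ (d23.1.trans d23.2.symm)
  · simp [SimpleGraph.dist_self]
  · exact d3B1.1.trans d3B1.2.symm
  · exact d3B2.1.trans d3B2.2.symm
  · exact d3b.1.trans d3b.2.symm
  · exact comm _ _ (d1b.1.trans d1b.2.symm)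
  · exact comm _ _ (d2B1.1.trans d2B1.2.symm)
  · exact comm _ _ (d3B1.1.trans d3B1.2.symm)
  · simp [SimpleGraph.dist_self]
  · exact dB1B2.1.trans dB1B2.2.symm
  · exact dB1B3.1.trans dB1B3.2.symm
  · exact comm _ _ (d1B2.1.trans d1B2.2.symm)
  · exact comm _ _ (d2b.1.trans d2b.2.symm)
  · exact comm _ _ (d3B2.1.trans d3B2.2.symm)
  · exact comm _ _ (dB1B2.1.trans dB1B2.2.symm)
  · simp [SimpleGraph.dist_self]
  · exact dB2B3.1.trans dB2B3.2.symm
  · exact comm _ _ (d1B3.1.trans d1B3.2.symm)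
  · exact comm _ _ (d2B3.1.trans d2B3.2.symm)
  · exact comm _ _ (d3b.1.trans d3b.2.symm)
  · exact comm _ _ (dB1B3.1.trans dB1B3.2.symm)
  · exact comm _ _ (dB2B3.1.trans dB2B3.2.symm)
  · simp [SimpleGraph.dist_self]

end Stmt13

/-- in `GP(∞,3)`, the subgraph induced on the six vertices
`{a_1, a_2, a_3, b_1, b_2, b_3}` is a tree, and it is an isometric subgraph of `GP(∞,3)`:
distances between these vertices in the induced subgraph agree with distances in
`GP(∞,3)`. -/
theorem stmt13 :
    ((GPinf 3).induce ({Sum.inl 1, Sum.inl 2, Sum.inl 3, Sum.inr 1, Sum.inr 2, Sum.inr 3} :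
      Set (ℤ ⊕ ℤ))).IsTree ∧
    ∀ u v : ({Sum.inl 1, Sum.inl 2, Sum.inl 3, Sum.inr 1, Sum.inr 2, Sum.inr 3} :
        Set (ℤ ⊕ ℤ)),
      ((GPinf 3).induce ({Sum.inl 1, Sum.inl 2, Sum.inl 3, Sum.inr 1, Sum.inr 2, Sum.inr 3} :
        Set (ℤ ⊕ ℤ))).dist u v = (GPinf 3).dist u v := by
  exact ⟨⟨Stmt13.gi_connected, Stmt13.gi_acyclic⟩, fun u v => Stmt13.distEq u v⟩
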